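/- arXiv:1112.6142 — 2 statements merged into one kernel-verified Lean document; each statement's English description precedes it below -/
import Mathlib

section
/- Let d_N^1 denote the supremum over all real α of min_{1 ≤ k ≤ N} ‖F_k α‖ (this supremum is attained). Then d_1^1 = 1/2, d_2^1 = 1/2, d_3^1 = 1/3, d_4^1 = 1/4 and d_5^1 = 1/4. -/
/-- Distance from a real number to the nearest integer. -/
noncomputable def distNearestInt (x : ℝ) : ℝ := |x - round x|

/-- `minFib N α` is `min_{1 ≤ k ≤ N} ‖F_k α‖` (junk value `0` if `N = 0`). -/
noncomputable def minFib (N : ℕ) (α : ℝ) : ℝ :=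
  if h : (Finset.Icc 1 N).Nonempty then
    (Finset.Icc 1 N).inf' h (fun k => distNearestInt ((Nat.fib k : ℝ) * α))
  else 0

lemma dni_le (x : ℝ) (m : ℤ) : distNearestInt x ≤ |x - m| := round_le x m

lemma dni_add_int (x : ℝ) (n : ℤ) : distNearestInt (x + n) = distNearestInt x := by
  simp [distNearestInt, round_add_intCast]

lemma minFib_le (N : ℕ) (α : ℝ) (k : ℕ) (hk : k ∈ Finset.Icc 1 N) :
    minFib N α ≤ distNearestInt ((Nat.fib k : ℝ) * α) := by
  rw [minFib, dif_pos ⟨k, hk⟩]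
  exact Finset.inf'_le _ hk

lemma dni_mul (c : ℕ) (α : ℝ) :
    distNearestInt ((c : ℝ) * α) = distNearestInt ((c : ℝ) * (α - round α)) := by
  have h := dni_add_int ((c : ℝ) * (α - round α)) ((c : ℤ) * round α)
  rw [← h]
  push_cast
  ring_nf

lemma dni1 (α : ℝ) : distNearestInt ((1 : ℝ) * α) ≤ |α - (round α : ℝ)| := by
  rw [show ((1:ℝ)) = ((1:ℕ):ℝ) by norm_num, dni_mul 1 α]
  simpa using dni_le (α - (round α : ℝ)) 0

lemma dni2 (α : ℝ) (h : |α - (round α : ℝ)| ≤ 1/2) :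
    distNearestInt ((2 : ℝ) * α) ≤ 1 - 2 * |α - (round α : ℝ)| := by
  rw [show ((2:ℝ)) = ((2:ℕ):ℝ) by norm_num, dni_mul 2 α]
  set t := α - (round α : ℝ) with ht
  rcases le_or_gt 0 t with h0 | h0
  · have h' := dni_le ((2:ℝ) * t) 1
    rw [abs_of_nonneg h0] at h ⊢
    calc distNearestInt (((2:ℕ):ℝ) * t) ≤ |2 * t - ((1:ℤ):ℝ)| := by push_cast at h' ⊢; exact h'
    _ = 1 - 2 * t := by rw [abs_sub_comm, abs_of_nonneg (by push_cast; linarith)]; push_cast; ring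
  · have h' := dni_le ((2:ℝ) * t) (-1)
    rw [abs_of_neg h0] at h ⊢
    calc distNearestInt (((2:ℕ):ℝ) * t) ≤ |2 * t - ((-1:ℤ):ℝ)| := by push_cast at h' ⊢; exact h'
    _ = 1 - 2 * (-t) := by rw [abs_of_nonneg (by push_cast; linarith)]; push_cast; ring

lemma dni3 (α : ℝ) :
    distNearestInt ((3 : ℝ) * α) ≤ |3 * |α - (round α : ℝ)| - 1| := by
  rw [show ((3:ℝ)) = ((3:ℕ):ℝ) by norm_num, dni_mul 3 α]
  set t := α - (round α : ℝ) with ht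
  rcases le_or_gt 0 t with h0 | h0
  · have h' := dni_le ((3:ℝ) * t) 1
    rw [abs_of_nonneg h0]
    calc distNearestInt (((3:ℕ):ℝ) * t) ≤ |3 * t - ((1:ℤ):ℝ)| := by push_cast at h' ⊢; exact h'
    _ = |3 * t - 1| := by norm_num
  · have h' := dni_le ((3:ℝ) * t) (-1)
    rw [abs_of_neg h0]
    calc distNearestInt (((3:ℕ):ℝ) * t) ≤ |3 * t - ((-1:ℤ):ℝ)| := by push_cast at h' ⊢; exact h'
    _ = |3 * (-t) - 1| := by rw [← abs_neg]; congr 1; push_cast; ring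

lemma ub1 (N : ℕ) (hN : 1 ≤ N) (α : ℝ) : minFib N α ≤ 1/2 := by
  have h1 : minFib N α ≤ |α - (round α : ℝ)| :=
    le_trans (minFib_le N α 1 (by simp [Finset.mem_Icc]; omega))
      (by rw [show (Nat.fib 1 : ℝ) = 1 by norm_num]; exact dni1 α)
  have := abs_sub_round α
  linarith

lemma ub3 (N : ℕ) (hN : 3 ≤ N) (α : ℝ) : minFib N α ≤ 1/3 := by
  set u := |α - (round α : ℝ)| with hu
  have hu2 : u ≤ 1/2 := abs_sub_round α
  have h1 : minFib N α ≤ u :=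
    le_trans (minFib_le N α 1 (by simp [Finset.mem_Icc]; omega))
      (by rw [show (Nat.fib 1 : ℝ) = 1 by norm_num]; exact dni1 α)
  have h3 : minFib N α ≤ 1 - 2 * u :=
    le_trans (minFib_le N α 3 (by simp [Finset.mem_Icc]; omega))
      (by rw [show (Nat.fib 3 : ℝ) = 2 by norm_num]; exact dni2 α hu2)
  rcases le_or_gt u (1/3) with h | h
  · linarith
  · linarith

lemma ub4 (N : ℕ) (hN : 4 ≤ N) (α : ℝ) : minFib N α ≤ 1/4 := by
  set u := |α - (round α : ℝ)| with hu
  have hu2 : u ≤ 1/2 := abs_sub_round α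
  have h1 : minFib N α ≤ u :=
    le_trans (minFib_le N α 1 (by simp [Finset.mem_Icc]; omega))
      (by rw [show (Nat.fib 1 : ℝ) = 1 by norm_num]; exact dni1 α)
  have h3 : minFib N α ≤ 1 - 2 * u :=
    le_trans (minFib_le N α 3 (by simp [Finset.mem_Icc]; omega))
      (by rw [show (Nat.fib 3 : ℝ) = 2 by norm_num]; exact dni2 α hu2)
  have h4 : minFib N α ≤ |3 * u - 1| :=
    le_trans (minFib_le N α 4 (by simp [Finset.mem_Icc]; omega))
      (by rw [show (Nat.fib 4 : ℝ) = 3 by norm_num]; exact dni3 α)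
  rcases le_or_gt u (1/4) with h | h
  · linarith
  rcases le_or_gt (5/12) u with h' | h'
  · linarith
  · have : |3 * u - 1| ≤ 1/4 := abs_le.mpr ⟨by linarith, by linarith⟩
    linarith

lemma minFib_eq (N : ℕ) (hN : 1 ≤ N) (α c : ℝ)
    (hle : distNearestInt ((Nat.fib 1 : ℝ) * α) = c)
    (hall : ∀ k ∈ Finset.Icc 1 N, c ≤ distNearestInt ((Nat.fib k : ℝ) * α)) :
    minFib N α = c := by
  apply le_antisymm
  · rw [← hle]; exact minFib_le N α 1 (by simp [Finset.mem_Icc]; omega)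
  · rw [minFib, dif_pos ⟨1, by simp [Finset.mem_Icc]; omega⟩]
    exact Finset.le_inf' _ _ hall

theorem d_one_to_five :
    IsGreatest {y : ℝ | ∃ α : ℝ, y = minFib 1 α} (1 / 2) ∧
    IsGreatest {y : ℝ | ∃ α : ℝ, y = minFib 2 α} (1 / 2) ∧
    IsGreatest {y : ℝ | ∃ α : ℝ, y = minFib 3 α} (1 / 3) ∧
    IsGreatest {y : ℝ | ∃ α : ℝ, y = minFib 4 α} (1 / 4) ∧
    IsGreatest {y : ℝ | ∃ α : ℝ, y = minFib 5 α} (1 / 4) := by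
  have m1 : minFib 1 (1/2) = 1/2 := by
    apply minFib_eq 1 (by norm_num)
    · norm_num [distNearestInt, round_eq]
    · intro k hk
      simp only [Finset.mem_Icc] at hk
      obtain ⟨hk1, hk2⟩ := hk
      interval_cases k <;> norm_num [distNearestInt, round_eq, abs_of_nonneg]
  have m2 : minFib 2 (1/2) = 1/2 := by
    apply minFib_eq 2 (by norm_num)
    · norm_num [distNearestInt, round_eq]
    · intro k hk
      simp only [Finset.mem_Icc] at hk
      obtain ⟨hk1, hk2⟩ := hk
      interval_cases k <;> norm_num [distNearestInt, round_eq, abs_of_nonneg]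
  have m3 : minFib 3 (1/3) = 1/3 := by
    apply minFib_eq 3 (by norm_num)
    · norm_num [distNearestInt, round_eq]
    · intro k hk
      simp only [Finset.mem_Icc] at hk
      obtain ⟨hk1, hk2⟩ := hk
      interval_cases k <;> norm_num [distNearestInt, round_eq, abs_of_nonneg]
  have m4 : minFib 4 (1/4) = 1/4 := by
    apply minFib_eq 4 (by norm_num)
    · norm_num [distNearestInt, round_eq]
    · intro k hk
      simp only [Finset.mem_Icc] at hk
      obtain ⟨hk1, hk2⟩ := hk
      interval_cases k <;> norm_num [distNearestInt, round_eq, abs_of_nonneg]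
  have m5 : minFib 5 (1/4) = 1/4 := by
    apply minFib_eq 5 (by norm_num)
    · norm_num [distNearestInt, round_eq]
    · intro k hk
      simp only [Finset.mem_Icc] at hk
      obtain ⟨hk1, hk2⟩ := hk
      interval_cases k <;> norm_num [distNearestInt, round_eq, abs_of_nonneg]
  refine ⟨⟨⟨1/2, m1.symm⟩, ?_⟩, ⟨⟨1/2, m2.symm⟩, ?_⟩, ⟨⟨1/3, m3.symm⟩, ?_⟩,
    ⟨⟨1/4, m4.symm⟩, ?_⟩, ⟨⟨1/4, m5.symm⟩, ?_⟩⟩ <;>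
  · rintro y ⟨α, rfl⟩
    first
      | exact ub1 _ (by norm_num) α
      | exact ub3 _ (by norm_num) α
      | exact ub4 _ (by norm_num) α
end

section
/- For every positive integer n, T_n is the nearest integer to F_n/(φ+2); that is, |F_n/(φ+2) − T_n| < 1/2 and ‖F_n/(φ+2)‖ = |F_n/(φ+2) − T_n|. -/
/-- The golden ratio. -/
noncomputable def φ : ℝ := (1 + Real.sqrt 5) / 2

/-- `T n = Σ_{k=1}^{⌊n/2⌋} (−1)^{k+1} F_{n−2k}`. -/
def T (n : ℕ) : ℤ := ∑ k ∈ Finset.Icc 1 (n / 2), (-1 : ℤ) ^ (k + 1) * (Nat.fib (n - 2 * k) : ℤ)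

noncomputable def ψ : ℝ := (1 - Real.sqrt 5) / 2

def c (n : ℕ) : ℤ :=
  if n % 4 = 0 then -1 else if n % 4 = 1 then 2 else if n % 4 = 2 then 1 else -2

lemma hs5 : Real.sqrt 5 ^ 2 = 5 := Real.sq_sqrt (by norm_num)

lemma hs5_lb : (2 : ℝ) < Real.sqrt 5 := by
  nlinarith [hs5, Real.sqrt_nonneg 5]

lemma hs5_ub : Real.sqrt 5 < 9/4 := by
  nlinarith [hs5, Real.sqrt_nonneg 5]

lemma phi_sq : φ ^ 2 = φ + 1 := by
  simp only [φ]; linear_combination hs5 / 4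

lemma phi_add_psi : φ + ψ = 1 := by simp only [φ, ψ]; ring

lemma phi_sub_psi : φ - ψ = Real.sqrt 5 := by simp only [φ, ψ]; ring

lemma fib_id (m : ℕ) : (Nat.fib (m + 1) : ℝ) = φ * Nat.fib m + ψ ^ m := by
  have h5 : (0:ℝ) < Real.sqrt 5 := Real.sqrt_pos.mpr (by norm_num)
  have h1 : (Nat.fib (m + 1) : ℝ) = (φ ^ (m+1) - ψ ^ (m+1)) / Real.sqrt 5 :=
    Real.coe_fib_eq (m + 1)
  have h2 : (Nat.fib m : ℝ) = (φ ^ m - ψ ^ m) / Real.sqrt 5 := Real.coe_fib_eq m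
  rw [h1, h2, pow_succ, pow_succ]
  field_simp
  linear_combination (ψ ^ m) * phi_sub_psi

lemma fib_id2 (m : ℕ) : (Nat.fib (m + 2) : ℝ) = (φ + 1) * Nat.fib m + ψ ^ m := by
  have h1 : (Nat.fib (m + 2) : ℝ) = φ * Nat.fib (m + 1) + ψ ^ (m + 1) := fib_id (m + 1)
  rw [h1, fib_id m, pow_succ]
  linear_combination (Nat.fib m : ℝ) * phi_sq + (ψ ^ m) * phi_add_psi

lemma c_add_two (n : ℕ) : c (n + 2) = - c n := by
  have h : n % 4 = 0 ∨ n % 4 = 1 ∨ n % 4 = 2 ∨ n % 4 = 3 := by omega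
  rcases h with h | h | h | h <;>
    · have h2 : (n + 2) % 4 = (n % 4 + 2) % 4 := by omega
      simp [c, h, h2]

lemma T_rec (n : ℕ) : T (n + 2) = (Nat.fib n : ℤ) - T n := by
  unfold T
  have h : (n + 2) / 2 = n / 2 + 1 := by omega
  rw [h, ← Finset.Ico_add_one_right_eq_Icc, ← Finset.Ico_add_one_right_eq_Icc,
    Finset.sum_Ico_eq_sum_range, Finset.sum_Ico_eq_sum_range]
  simp only [Nat.add_sub_cancel, Nat.succ_sub_one]
  rw [Finset.sum_range_succ']
  have h0 : n + 2 - 2 * (1 + 0) = n := by omega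
  rw [h0]
  have : ∀ i ∈ Finset.range (n / 2),
      (-1 : ℤ) ^ (1 + (i + 1) + 1) * (Nat.fib (n + 2 - 2 * (1 + (i + 1))) : ℤ)
      = -((-1 : ℤ) ^ (1 + i + 1) * (Nat.fib (n - 2 * (1 + i)) : ℤ)) := by
    intro i _
    have h1 : n + 2 - 2 * (1 + (i + 1)) = n - 2 * (1 + i) := by omega
    rw [h1]; ring
  rw [Finset.sum_congr rfl this, Finset.sum_neg_distrib]
  ring

lemma phi_two_pos : (0 : ℝ) < φ + 2 := by simp only [φ]; nlinarith [hs5_lb]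

lemma key (n : ℕ) :
    (Nat.fib n : ℝ) / (φ + 2) - T n = ((c n : ℝ) + ψ ^ n) / 5 := by
  have hφ2 := phi_two_pos
  induction n using Nat.twoStepInduction with
  | zero => simp [T, c]
  | one =>
      simp only [T, c]
      norm_num
      simp only [φ, ψ]
      rw [inv_eq_one_div,
        div_eq_div_iff (by positivity) (by norm_num : (5:ℝ) ≠ 0)]
      linear_combination hs5 / 4
  | more n ih1 ih2 =>
      have hT := T_rec n
      have hfib := fib_id2 n
      have hψ2 : (φ + 2) * ψ ^ 2 = 3 - φ := by
        simp only [φ, ψ]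
        linear_combination ((Real.sqrt 5 + 3) / 8) * hs5
      have key2 : ψ ^ n / (φ + 2) - ψ ^ n / 5 = ψ ^ (n + 2) / 5 := by
        rw [div_sub_div _ _ (ne_of_gt hφ2) (by norm_num),
          div_eq_div_iff (by positivity) (by norm_num : (5:ℝ) ≠ 0)]
        have hp : ψ ^ (n + 2) = ψ ^ n * ψ ^ 2 := by ring
        rw [hp]
        linear_combination (-5 * ψ ^ n) * hψ2
      have main : ((φ + 1) * (Nat.fib n : ℝ) + ψ ^ n) / (φ + 2)
          = (Nat.fib n : ℝ) - (Nat.fib n : ℝ) / (φ + 2) + ψ ^ n / (φ + 2) := by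
        field_simp
        ring
      rw [hfib]
      rw [show ((T (n + 2) : ℝ)) = (Nat.fib n : ℝ) - T n by rw [hT]; push_cast; ring,
        show ((c (n + 2) : ℝ)) = -(c n : ℝ) by rw [c_add_two]; push_cast; ring,
        main]
      linarith [key2, ih1]

lemma psi_neg : ψ < 0 := by simp only [ψ]; nlinarith [hs5_lb]

lemma psi_abs_lt : |ψ| < 3 / 4 := by
  rw [abs_lt]; simp only [ψ]
  constructor <;> [nlinarith [hs5_ub]; nlinarith [hs5_lb]]

lemma abs_psi_pow_le (n : ℕ) (hn : 1 ≤ n) : |ψ ^ n| ≤ |ψ| := by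
  rw [abs_pow]
  calc |ψ| ^ n ≤ |ψ| ^ 1 :=
        pow_le_pow_of_le_one (abs_nonneg _) (by linarith [psi_abs_lt]) hn
    _ = |ψ| := pow_one _

lemma abs_psi_pow_lt3 (n : ℕ) (hn : 3 ≤ n) : |ψ ^ n| < 1 / 2 := by
  rw [abs_pow]
  calc |ψ| ^ n ≤ |ψ| ^ 3 :=
        pow_le_pow_of_le_one (abs_nonneg _) (by linarith [psi_abs_lt]) hn
    _ ≤ (3/4) ^ 3 := pow_le_pow_left₀ (abs_nonneg _) (le_of_lt psi_abs_lt) 3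
    _ < 1 / 2 := by norm_num

lemma bound (n : ℕ) (hn : 1 ≤ n) : |(c n : ℝ) + ψ ^ n| < 5 / 2 := by
  have hp34 : |ψ ^ n| < 3 / 4 := lt_of_le_of_lt (abs_psi_pow_le n hn) psi_abs_lt
  have hp := abs_lt.mp hp34
  have h4 : n % 4 = 0 ∨ n % 4 = 1 ∨ n % 4 = 2 ∨ n % 4 = 3 := by omega
  rw [abs_lt]
  rcases h4 with h | h | h | h
  · have hc : c n = -1 := by simp [c, h]
    rw [hc]; push_cast
    constructor <;> linarith [hp.1, hp.2]
  · have hc : c n = 2 := by simp [c, h]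
    have hodd : Odd n := Nat.odd_iff.mpr (by omega)
    have hnp : ψ ^ n ≤ 0 := hodd.pow_nonpos (le_of_lt psi_neg)
    rw [hc]; push_cast
    constructor <;> linarith [hp.1]
  · have hc : c n = 1 := by simp [c, h]
    rw [hc]; push_cast
    constructor <;> linarith [hp.1, hp.2]
  · have hc : c n = -2 := by simp [c, h]
    have hn3 : 3 ≤ n := by omega
    have hs := abs_lt.mp (abs_psi_pow_lt3 n hn3)
    rw [hc]; push_cast
    constructor <;> linarith [hs.1, hs.2]

theorem T_nearest_int (n : ℕ) (hn : 1 ≤ n) :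
    |(Nat.fib n : ℝ) / (φ + 2) - (T n : ℝ)| < 1 / 2 ∧
    distNearestInt ((Nat.fib n : ℝ) / (φ + 2)) = |(Nat.fib n : ℝ) / (φ + 2) - (T n : ℝ)| := by
  have hkey := key n
  have hb := bound n hn
  have h1 : |(Nat.fib n : ℝ) / (φ + 2) - (T n : ℝ)| < 1 / 2 := by
    rw [hkey, abs_div]
    have h5 : |(5 : ℝ)| = 5 := by norm_num
    rw [h5]
    linarith [hb]
  refine ⟨h1, ?_⟩
  have habs := abs_lt.mp h1
  have hr : round ((Nat.fib n : ℝ) / (φ + 2)) = T n := by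
    rw [round_eq]
    apply Int.floor_eq_iff.mpr
    constructor
    · linarith [habs.1]
    · push_cast
      linarith [habs.2]
  rw [distNearestInt, hr]
end
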